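/- arXiv:1102.1088 — 8 statements merged into one kernel-verified Lean document; each statement's English description precedes it below -/
import Mathlib

section
/- In any SMV-algebra (A, τ), if x ⊙ y = 0 then τ(x) ⊙ τ(y) = 0 and τ(x ⊕ y) = τ(x) ⊕ τ(y). -/
/-- An MV-algebra `(A, ⊕, ¬, 0)`. -/
class MV (A : Type*) extends Zero A where
  oplus : A → A → A
  mvneg : A → A
  oplus_assoc : ∀ x y z : A, oplus (oplus x y) z = oplus x (oplus y z)
  oplus_comm : ∀ x y : A, oplus x y = oplus y x
  oplus_zero : ∀ x : A, oplus x 0 = x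
  mvneg_mvneg : ∀ x : A, mvneg (mvneg x) = x
  oplus_top : ∀ x : A, oplus x (mvneg 0) = mvneg 0
  luk : ∀ x y : A, oplus (mvneg (oplus (mvneg x) y)) y = oplus (mvneg (oplus (mvneg y) x)) x

namespace MV

variable {A : Type*} [MV A]

/-- The top element `1 = ¬0`. -/
def top : A := mvneg 0
/-- `x → y := ¬x ⊕ y`. -/
def imp (x y : A) : A := oplus (mvneg x) y
/-- `x ⊙ y := ¬(¬x ⊕ ¬y)`. -/
def odot (x y : A) : A := mvneg (oplus (mvneg x) (mvneg y))
/-- `x ⊖ y := ¬(¬x ⊕ y)`. -/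
def ominus (x y : A) : A := mvneg (oplus (mvneg x) y)
/-- Lattice join `x ∨ y := (x → y) → y`. -/
def mvsup (x y : A) : A := imp (imp x y) y
/-- Lattice meet `x ∧ y := x ⊙ (x → y)`. -/
def mvinf (x y : A) : A := odot x (imp x y)
/-- The lattice order: `x ≤ y` iff `x → y = 1`. -/
def mvle (x y : A) : Prop := imp x y = top
/-- Strict order. -/
def mvlt (x y : A) : Prop := mvle x y ∧ x ≠ y

/-- `(A, τ)` is an SMV-algebra. -/
structure IsSMV (τ : A → A) : Prop where
  map_top : τ top = top
  tau_oplus : ∀ x y : A, τ (oplus x y) = oplus (τ x) (τ (ominus y (odot x y)))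
  map_neg : ∀ x : A, τ (mvneg x) = mvneg (τ x)
  tau_fix : ∀ x y : A, τ (oplus (τ x) (τ y)) = oplus (τ x) (τ y)

/-- `(A, τ)` is a state morphism MV-algebra. -/
def IsSMMV (τ : A → A) : Prop := IsSMV τ ∧ ∀ x y : A, τ (oplus x y) = oplus (τ x) (τ y)

/-- An MV-filter. -/
structure IsFilter (F : Set A) : Prop where
  top_mem : top ∈ F
  mp : ∀ a b : A, a ∈ F → imp a b ∈ F → b ∈ F

/-- A `τ`-filter: an MV-filter closed under `τ`. -/
def IsTauFilter (τ : A → A) (F : Set A) : Prop := IsFilter F ∧ ∀ a ∈ F, τ a ∈ F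

/-- Subdirect irreducibility of an SMV-algebra: there is a minimum nontrivial `τ`-filter. -/
def SubdirIrrSMV (τ : A → A) : Prop :=
  ∃ F : Set A, IsTauFilter τ F ∧ F ≠ {top} ∧
    ∀ G : Set A, IsTauFilter τ G → G ≠ {top} → F ⊆ G

/-- A filter of the subalgebra/subhoop with universe `S`. -/
def IsFilterOn (S F : Set A) : Prop :=
  F ⊆ S ∧ top ∈ F ∧ ∀ a b : A, a ∈ F → b ∈ S → imp a b ∈ F → b ∈ F

/-- Subdirect irreducibility of the subalgebra/subhoop with universe `S`:
there is a minimum nontrivial filter on `S`. -/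
def SubdirIrrOn (S : Set A) : Prop :=
  ∃ F : Set A, IsFilterOn S F ∧ F ≠ {top} ∧
    ∀ G : Set A, IsFilterOn S G → G ≠ {top} → F ⊆ G

/-- The set `F_τ(A) = {a : τ a = 1}`. -/
def tauKernel (τ : A → A) : Set A := {a : A | τ a = top}

/-- Homomorphisms of MV-algebras. -/
structure IsMVHom {A B : Type*} [MV A] [MV B] (f : A → B) : Prop where
  map_oplus : ∀ x y : A, f (oplus x y) = oplus (f x) (f y)
  map_neg : ∀ x : A, f (mvneg x) = mvneg (f x)
  map_zero : f 0 = 0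

end MV

open MV

instance MV.instProd {A B : Type*} [MV A] [MV B] : MV (A × B) where
  oplus x y := (oplus x.1 y.1, oplus x.2 y.2)
  mvneg x := (mvneg x.1, mvneg x.2)
  oplus_assoc x y z := by simp [oplus_assoc]
  oplus_comm x y := by simp [oplus_comm x.1 y.1, oplus_comm x.2 y.2]
  oplus_zero x := by simp [oplus_zero]
  mvneg_mvneg x := by simp [mvneg_mvneg]
  oplus_top x := by simp [oplus_top]
  luk x y := by simp [luk]

instance MV.instPi {I : Type*} {A : I → Type*} [∀ i, MV (A i)] : MV (∀ i, A i) where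
  oplus x y i := oplus (x i) (y i)
  mvneg x i := mvneg (x i)
  oplus_assoc x y z := by funext i; simp [oplus_assoc]
  oplus_comm x y := by funext i; exact oplus_comm _ _
  oplus_zero x := by funext i; exact oplus_zero _
  mvneg_mvneg x := by funext i; exact mvneg_mvneg _
  oplus_top x := by funext i; exact oplus_top _
  luk x y := by funext i; exact luk _ _

/-- In any SMV-algebra `(A, τ)`, if `x ⊙ y = 0` then
`τ x ⊙ τ y = 0` and `τ (x ⊕ y) = τ x ⊕ τ y`. -/
theorem smv_additive_on_disjoint {A : Type*} [MV A] (τ : A → A) (h : IsSMV τ)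
    (x y : A) (hxy : odot x y = 0) :
    odot (τ x) (τ y) = 0 ∧ τ (oplus x y) = oplus (τ x) (τ y) := by
  have neg_top : mvneg (top : A) = 0 := mvneg_mvneg 0
  have zero_oplus : ∀ a : A, oplus 0 a = a := fun a => by
    rw [oplus_comm, oplus_zero]
  have top_oplus : ∀ a : A, oplus (top : A) a = top := fun a => by
    rw [oplus_comm]; exact oplus_top a
  have neg_oplus_self : ∀ a : A, oplus (mvneg a) a = top := fun a => by
    have hl := luk a (top : A)
    rw [show (top : A) = mvneg 0 from rfl, oplus_top, mvneg_mvneg, zero_oplus] at hl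
    exact hl.symm
  -- from hxy : ¬(¬x ⊕ ¬y) = 0, get ¬x ⊕ ¬y = top
  have hle : oplus (mvneg x) (mvneg y) = top := by
    have := congrArg mvneg hxy
    rwa [odot, mvneg_mvneg] at this
  -- second part
  have h2 : τ (oplus x y) = oplus (τ x) (τ y) := by
    have ht := h.tau_oplus x y
    rw [hxy] at ht
    rwa [ominus, oplus_zero, mvneg_mvneg] at ht
  refine ⟨?_, h2⟩
  -- ¬y = x ⊕ (¬y ⊖ x)
  set z : A := ominus (mvneg y) x with hz
  have hdecomp : mvneg y = oplus x z := by
    have hl := luk x (mvneg y)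
    rw [show mvneg (oplus (mvneg x) (mvneg y)) = (0 : A) by rw [hle, neg_top],
      zero_oplus] at hl
    rw [hl, hz, ominus, oplus_comm]
  -- τ(¬y) = τ x ⊕ w
  have ht := h.tau_oplus x z
  rw [← hdecomp, h.map_neg] at ht
  -- conclude
  rw [odot, ht, ← oplus_assoc, neg_oplus_self, top_oplus, neg_top]
end

section
/- An SMV-algebra (A, τ) is an SMMV-algebra if and only if it satisfies τ(x ∨ y) = τ(x) ∨ τ(y), and also if and only if it satisfies τ(x ∧ y) = τ(x) ∧ τ(y). -/
open MV

namespace MV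

variable {A : Type*} [MV A]

/-- De Morgan: `x ∧ y = ¬(¬x ∨ ¬y)`, via the Łukasiewicz axiom. -/
lemma mvinf_eq_neg_sup (x y : A) :
    mvinf x y = mvneg (mvsup (mvneg x) (mvneg y)) := by
  unfold mvinf mvsup odot imp
  congr 1
  rw [mvneg_mvneg]
  -- goal: ¬x ⊕ ¬(¬x ⊕ y) = ¬(x ⊕ ¬y) ⊕ ¬y
  calc oplus (mvneg x) (mvneg (oplus (mvneg x) y))
      = oplus (mvneg (oplus (mvneg (mvneg y)) (mvneg x))) (mvneg x) := by
        rw [oplus_comm, mvneg_mvneg, oplus_comm y (mvneg x)]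
    _ = oplus (mvneg (oplus (mvneg (mvneg x)) (mvneg y))) (mvneg y) := (luk (mvneg x) (mvneg y)).symm
    _ = oplus (mvneg (oplus x (mvneg y))) (mvneg y) := by rw [mvneg_mvneg]

lemma mvsup_eq_neg_inf (x y : A) :
    mvsup x y = mvneg (mvinf (mvneg x) (mvneg y)) := by
  rw [mvinf_eq_neg_sup, mvneg_mvneg, mvneg_mvneg, mvneg_mvneg]

/-- `y ⊖ (x ⊙ y) = y ∧ ¬x` (syntactic up to commutativity). -/
lemma ominus_odot_eq_inf (x y : A) :
    ominus y (odot x y) = mvinf y (mvneg x) := by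
  simp only [ominus, odot, mvinf, imp]
  rw [oplus_comm (mvneg x) (mvneg y)]

lemma tau_top' (h : IsSMV τ) : τ (top : A) = top := h.map_top

lemma tau_zero {τ : A → A} (h : IsSMV τ) : τ 0 = 0 := by
  have := h.map_neg (top : A)
  rw [h.map_top] at this
  have h0 : mvneg (top : A) = 0 := by rw [top, mvneg_mvneg]
  rw [h0] at this
  exact this

lemma tau_idem {τ : A → A} (h : IsSMV τ) (x : A) : τ (τ x) = τ x := by
  have := h.tau_fix x 0
  rw [tau_zero h, oplus_zero] at this
  exact this

/-- The key derived identity: `τx ⊕ (τy ∧ ¬τx) = τx ⊕ τy`. -/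
lemma tau_oplus_inf {τ : A → A} (h : IsSMV τ)
    (hinf : ∀ x y : A, τ (mvinf x y) = mvinf (τ x) (τ y)) (x y : A) :
    oplus (τ x) (mvinf (τ y) (mvneg (τ x))) = oplus (τ x) (τ y) := by
  have key := h.tau_oplus (τ x) (τ y)
  rw [h.tau_fix, ominus_odot_eq_inf, hinf, tau_idem h, tau_idem h, h.map_neg, tau_idem h] at key
  exact key.symm

end MV

/-- An SMV-algebra `(A, τ)` is an SMMV-algebra iff `τ` preserves joins,
and also iff `τ` preserves meets. -/
theorem smmv_iff_sup_iff_inf {A : Type*} [MV A] (τ : A → A) (h : IsSMV τ) :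
    (IsSMMV τ ↔ ∀ x y : A, τ (mvsup x y) = mvsup (τ x) (τ y)) ∧
    (IsSMMV τ ↔ ∀ x y : A, τ (mvinf x y) = mvinf (τ x) (τ y)) := by
  -- SMMV → sup-preserving
  have hPQ : IsSMMV τ → ∀ x y : A, τ (mvsup x y) = mvsup (τ x) (τ y) := by
    rintro ⟨-, hadd⟩ x y
    unfold mvsup imp
    rw [hadd, h.map_neg, hadd, h.map_neg]
  -- sup-preserving → inf-preserving
  have hQR : (∀ x y : A, τ (mvsup x y) = mvsup (τ x) (τ y)) →
      ∀ x y : A, τ (mvinf x y) = mvinf (τ x) (τ y) := by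
    intro hsup x y
    rw [mvinf_eq_neg_sup, h.map_neg, hsup, h.map_neg, h.map_neg,
      mvinf_eq_neg_sup (τ x) (τ y)]
  -- inf-preserving → sup-preserving
  have hRQ : (∀ x y : A, τ (mvinf x y) = mvinf (τ x) (τ y)) →
      ∀ x y : A, τ (mvsup x y) = mvsup (τ x) (τ y) := by
    intro hinf x y
    rw [mvsup_eq_neg_inf, h.map_neg, hinf, h.map_neg, h.map_neg,
      mvsup_eq_neg_inf (τ x) (τ y)]
  -- inf-preserving → SMMV
  have hRP : (∀ x y : A, τ (mvinf x y) = mvinf (τ x) (τ y)) → IsSMMV τ := by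
    intro hinf
    refine ⟨h, fun x y => ?_⟩
    rw [h.tau_oplus x y, ominus_odot_eq_inf, hinf, h.map_neg]
    exact tau_oplus_inf h hinf x y
  exact ⟨⟨hPQ, fun hq => hRP (hQR hq)⟩, ⟨fun hp => hQR (hPQ hp), hRP⟩⟩
end

section
/- Every linearly ordered SMV-algebra is an SMMV-algebra, i.e., if the MV-reduct of an SMV-algebra (A, τ) is totally ordered then τ(x⊕y) = τ(x)⊕τ(y) for all x, y. -/
open MV

lemma MV.neg_oplus_self {A : Type*} [MV A] (x : A) :
    oplus (mvneg x) x = (top : A) := by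
  have hl := luk x (mvneg (0 : A))
  rw [oplus_top, mvneg_mvneg] at hl
  have h0 : ∀ z : A, oplus 0 z = z := fun z => by rw [oplus_comm, oplus_zero]
  rw [h0] at hl
  exact hl.symm

/-- Every linearly ordered SMV-algebra is an SMMV-algebra. -/
theorem linear_smv_is_smmv {A : Type*} [MV A] (τ : A → A) (h : IsSMV τ)
    (htot : ∀ x y : A, mvle x y ∨ mvle y x) :
    ∀ x y : A, τ (oplus x y) = oplus (τ x) (τ y) := by
  intro x y
  have hnt : mvneg (top : A) = 0 := by rw [top, mvneg_mvneg]
  rcases htot (mvneg x) y with h1 | h2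
  · -- mvneg x ≤ y, so x ⊕ y = top
    have hxy : oplus x y = top := by
      have := h1
      unfold mvle imp at this
      rwa [mvneg_mvneg] at this
    set a : A := mvneg x with ha
    set b : A := mvneg (oplus (mvneg y) a) with hb
    have hab : oplus a b = y := by
      have hl := luk y a
      -- ¬(¬y ⊕ a) ⊕ a = ¬(¬a ⊕ y) ⊕ y
      have hna : mvneg a = x := by rw [ha, mvneg_mvneg]
      rw [hna, hxy, hnt] at hl
      have h0 : oplus (0 : A) y = y := by rw [oplus_comm, oplus_zero]
      rw [h0] at hl
      rw [oplus_comm]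
      exact hl
    have hy : τ y = oplus (τ a) (τ (ominus b (odot a b))) := by
      rw [← hab]; exact h.tau_oplus a b
    have hta : τ a = mvneg (τ x) := by rw [ha, h.map_neg]
    have : oplus (τ x) (τ y) = top := by
      rw [hy, hta, ← oplus_assoc]
      have h1' : oplus (τ x) (mvneg (τ x)) = (top : A) := by
        rw [oplus_comm]; exact neg_oplus_self _
      rw [h1', oplus_comm, top, oplus_top]
    rw [hxy, h.map_top, this]
  · -- y ≤ mvneg x, so x ⊙ y = 0
    have hnn : oplus (mvneg x) (mvneg y) = top := by
      have := h2
      unfold mvle imp at this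
      rwa [oplus_comm] at this
    have hod : odot x y = 0 := by rw [odot, hnn, hnt]
    have hom : ominus y (odot x y) = y := by
      rw [hod, ominus, oplus_zero, mvneg_mvneg]
    have := h.tau_oplus x y
    rwa [hom] at this
end

section
/- Let (A, τ) be a subdirectly irreducible SMV-algebra. Then the Wajsberg hoop F_τ(A) := {a ∈ A : τ(a) = 1} (with operations →, ⊙, 1) is either trivial or subdirectly irreducible. -/
open MV

section Aux

variable {A : Type*} [MV A]

lemma aux_oplus_left_comm (x y z : A) : oplus x (oplus y z) = oplus y (oplus x z) := by
  rw [← oplus_assoc, oplus_comm x y, oplus_assoc]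

lemma aux_zero_oplus (x : A) : oplus 0 x = x := by rw [oplus_comm, oplus_zero]

lemma aux_oplus_top (x : A) : oplus x top = top := oplus_top x

lemma aux_top_oplus (x : A) : oplus top x = top := by rw [oplus_comm]; exact oplus_top x

lemma aux_neg_top : (mvneg top : A) = 0 := mvneg_mvneg 0

lemma aux_neg_oplus_self (x : A) : oplus (mvneg x) x = top := by
  have := luk (top : A) x
  rw [aux_neg_top, aux_zero_oplus, aux_oplus_top] at this
  exact this

lemma aux_self_oplus_neg (x : A) : oplus x (mvneg x) = top := by
  rw [oplus_comm]; exact aux_neg_oplus_self x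

lemma aux_top_le {x : A} (h : mvle top x) : x = top := by
  unfold mvle imp at h
  rwa [aux_neg_top, aux_zero_oplus] at h

lemma aux_mvle_refl (x : A) : mvle x x := aux_neg_oplus_self x

lemma aux_eq_of_le {x y : A} (h : mvle x y) : oplus (ominus y x) x = y := by
  have hl := luk y x
  unfold mvle imp at h
  unfold ominus
  rw [hl, h, aux_neg_top, aux_zero_oplus]

lemma aux_le_oplus_left (x z : A) : mvle x (oplus x z) := by
  show oplus (mvneg x) (oplus x z) = top
  rw [← oplus_assoc, aux_neg_oplus_self, aux_top_oplus]

lemma aux_mvle_trans {x y z : A} (hxy : mvle x y) (hyz : mvle y z) : mvle x z := by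
  have hz := aux_eq_of_le hyz
  show oplus (mvneg x) z = top
  rw [← hz, aux_oplus_left_comm]
  unfold mvle imp at hxy
  rw [hxy, aux_oplus_top]

lemma aux_tau_mono {τ : A → A} (h : IsSMV τ) {x y : A} (hxy : mvle x y) :
    mvle (τ x) (τ y) := by
  have hy := aux_eq_of_le hxy
  rw [oplus_comm] at hy
  rw [← hy, h.tau_oplus]
  exact aux_le_oplus_left _ _

lemma aux_tau_top_of_le {τ : A → A} (h : IsSMV τ) {x y : A} (hxy : mvle x y)
    (hx : τ x = top) : τ y = top := by
  have := aux_tau_mono h hxy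
  rw [hx] at this
  exact aux_top_le this

lemma aux_tau_oplus_top {τ : A → A} (h : IsSMV τ) {x : A} (z : A) (hx : τ x = top) :
    τ (oplus x z) = top := by
  rw [h.tau_oplus, hx, aux_top_oplus]

lemma aux_tau_odot_top {τ : A → A} (h : IsSMV τ) {x y : A} (hx : τ x = top)
    (hy : τ y = top) : τ (odot x y) = top := by
  unfold odot
  rw [h.map_neg, h.tau_oplus, h.map_neg, hx, aux_neg_top, aux_zero_oplus, ← h.map_neg]
  unfold ominus
  rw [mvneg_mvneg, mvneg_mvneg]
  exact aux_tau_oplus_top h _ hy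

lemma aux_imp_odot (x y z : A) : imp (odot x y) z = imp x (imp y z) := by
  unfold imp odot
  rw [mvneg_mvneg, oplus_assoc]

lemma aux_odot_comm (x y : A) : odot x y = odot y x := by
  unfold odot; rw [oplus_comm]

lemma aux_odot_imp_le (a b : A) : mvle (odot a (imp a b)) b := by
  show imp _ _ = top
  rw [aux_imp_odot]
  show oplus (mvneg a) (imp (imp a b) b) = top
  unfold imp
  rw [luk, aux_oplus_left_comm, aux_neg_oplus_self, aux_oplus_top]

lemma aux_le_imp_odot (a b : A) : mvle a (imp b (odot a b)) := by
  show oplus (mvneg a) (oplus (mvneg b) (mvneg (oplus (mvneg a) (mvneg b)))) = top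
  rw [← oplus_assoc, aux_self_oplus_neg]

end Aux

/-- If `(A, τ)` is a subdirectly irreducible SMV-algebra, then the
Wajsberg hoop `F_τ(A)` is either trivial or subdirectly irreducible. -/
theorem kernel_trivial_or_subdirectly_irreducible {A : Type*} [MV A] (τ : A → A)
    (h : IsSMV τ) (hsi : SubdirIrrSMV τ) :
    tauKernel τ = ({top} : Set A) ∨ SubdirIrrOn (tauKernel τ) := by
  by_cases hk : tauKernel τ = ({top} : Set A)
  · exact Or.inl hk
  right
  obtain ⟨F, hF, hFne, hFmin⟩ := hsi
  have hker_mem : ∀ x : A, x ∈ tauKernel τ ↔ τ x = top := fun x => Iff.rfl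
  -- the kernel is a τ-filter
  have hker_tf : IsTauFilter τ (tauKernel τ) := by
    refine ⟨⟨h.map_top, fun a b ha hab => ?_⟩, fun a ha => ?_⟩
    · have h1 : τ (odot a (imp a b)) = top := aux_tau_odot_top h ha hab
      exact aux_tau_top_of_le h (aux_odot_imp_le a b) h1
    · show τ (τ a) = top
      rw [(hker_mem a).mp ha, h.map_top]
  have hFK : F ⊆ tauKernel τ := hFmin _ hker_tf hk
  refine ⟨F, ⟨hFK, hF.1.top_mem, fun a b ha _ hab => hF.1.mp a b ha hab⟩, hFne, ?_⟩
  intro G hG hGne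
  obtain ⟨hGS, hGtop, hGmp⟩ := hG
  -- G is closed under ⊙
  have hGodot : ∀ a b : A, a ∈ G → b ∈ G → odot a b ∈ G := by
    intro a b ha hb
    have hak : τ a = top := hGS ha
    have hbk : τ b = top := hGS hb
    have hc : imp b (odot a b) ∈ G := by
      refine hGmp a _ ha (aux_tau_top_of_le h (aux_le_imp_odot a b) hak) ?_
      rw [aux_le_imp_odot a b]; exact hGtop
    refine hGmp b _ hb ?_ hc
    exact aux_tau_odot_top h hak hbk
  -- H : the τ-filter generated by G
  set H : Set A := {b : A | ∃ g ∈ G, mvle g b} with hHdef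
  have hHtf : IsTauFilter τ H := by
    refine ⟨⟨⟨top, hGtop, aux_mvle_refl top⟩, fun a b ha hab => ?_⟩, fun b hb => ?_⟩
    · obtain ⟨g, hg, hga⟩ := ha
      obtain ⟨g', hg', hg'ab⟩ := hab
      refine ⟨odot g g', hGodot g g' hg hg', ?_⟩
      show imp (odot g g') b = top
      rw [aux_imp_odot]
      have h1 : mvle a (imp g' b) := by
        show imp a (imp g' b) = top
        rw [← aux_imp_odot, aux_odot_comm, aux_imp_odot]
        exact hg'ab
      exact aux_mvle_trans hga h1
    · obtain ⟨g, hg, hgb⟩ := hb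
      have hgk : τ g = top := hGS hg
      have : τ b = top := aux_tau_top_of_le h hgb hgk
      exact ⟨top, hGtop, by rw [this]; exact aux_mvle_refl top⟩
  have hHne : H ≠ ({top} : Set A) := by
    have : ∃ g ∈ G, g ≠ top := by
      by_contra hcon
      push_neg at hcon
      apply hGne
      ext x
      exact ⟨fun hx => hcon x hx, fun hx => by rw [Set.mem_singleton_iff] at hx; rw [hx]; exact hGtop⟩
    obtain ⟨g, hg, hgt⟩ := this
    intro hH
    exact hgt (by rw [← Set.mem_singleton_iff, ← hH]; exact ⟨g, hg, aux_mvle_refl g⟩)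
  have hFH : F ⊆ H := hFmin H hHtf hHne
  intro b hb
  obtain ⟨g, hg, hgb⟩ := hFH hb
  refine hGmp g b hg (hFK hb) ?_
  rw [show imp g b = top from hgb]
  exact hGtop
end

section
/- In a subdirectly irreducible SMMV-algebra (A, τ), every element a satisfies a ≤ τ(a) or τ(a) ≤ a. -/
open MV

namespace MVThm
open MV

variable {A : Type*} [MV A]

lemma zero_oplus (x : A) : oplus 0 x = x := by rw [oplus_comm, oplus_zero]
lemma oplus_top' (x : A) : oplus x top = top := oplus_top x
lemma top_oplus (x : A) : oplus top x = top := by rw [oplus_comm]; exact oplus_top x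
lemma neg_top : (mvneg top : A) = 0 := mvneg_mvneg 0
lemma neg_inj {x y : A} (h : mvneg x = mvneg y) : x = y := by
  rw [← mvneg_mvneg x, h, mvneg_mvneg]
lemma oplus_left_comm (x y z : A) : oplus x (oplus y z) = oplus y (oplus x z) := by
  rw [← oplus_assoc, oplus_comm x y, oplus_assoc]

lemma la (x : A) : oplus (mvneg x) x = top := by
  have h := luk x (top : A)
  rw [oplus_top', neg_top, zero_oplus] at h
  exact h.symm

lemma le_e {x y : A} (h : mvle x y) : oplus (mvneg x) y = top := h
lemma le_i {x y : A} (h : oplus (mvneg x) y = top) : mvle x y := h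

lemma mle_refl (x : A) : mvle x x := la x
lemma mle_top (x : A) : mvle x top := oplus_top' _
lemma mtop_le {x : A} (h : mvle top x) : x = top := by
  have h' : oplus (mvneg top) x = top := h
  rwa [neg_top, zero_oplus] at h'

lemma sup_comm (x y : A) : mvsup x y = mvsup y x := luk x y

lemma sup_eq_right {x y : A} (h : mvle x y) : mvsup x y = y := by
  show oplus (mvneg (oplus (mvneg x) y)) y = y
  rw [le_e h, neg_top, zero_oplus]

lemma le_sup_left (x y : A) : mvle x (mvsup x y) := by
  show oplus (mvneg x) (oplus (mvneg (oplus (mvneg x) y)) y) = top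
  rw [oplus_left_comm, la]

lemma le_sup_right (x y : A) : mvle y (mvsup x y) := by
  rw [sup_comm]; exact le_sup_left y x

lemma eq_sup_of_le {x y : A} (h : mvle y x) : x = oplus (mvneg (oplus (mvneg x) y)) y := by
  have h1 := sup_eq_right h
  rw [sup_comm] at h1
  exact h1.symm

lemma mle_trans {x y z : A} (hxy : mvle x y) (hyz : mvle y z) : mvle x z := by
  show oplus (mvneg x) z = top
  conv_lhs => rw [eq_sup_of_le hyz]
  rw [oplus_left_comm, le_e hxy, oplus_top']

lemma mle_antisymm {x y : A} (h1 : mvle x y) (h2 : mvle y x) : x = y := by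
  have h3 := sup_eq_right h1
  have h4 := sup_eq_right h2
  rw [sup_comm] at h4
  exact h4.symm.trans h3

lemma oplus_le_oplus_left {x y : A} (h : mvle x y) (z : A) :
    mvle (oplus z x) (oplus z y) := by
  show oplus (mvneg (oplus z x)) (oplus z y) = top
  conv_lhs => rw [eq_sup_of_le h]
  rw [oplus_left_comm z, oplus_left_comm (mvneg (oplus z x)), la, oplus_top']

lemma oplus_le_oplus_right {x y : A} (h : mvle x y) (z : A) :
    mvle (oplus x z) (oplus y z) := by
  rw [oplus_comm x z, oplus_comm y z]; exact oplus_le_oplus_left h z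

lemma neg_le_neg {x y : A} (h : mvle x y) : mvle (mvneg y) (mvneg x) := by
  show oplus (mvneg (mvneg y)) (mvneg x) = top
  rw [mvneg_mvneg, oplus_comm]; exact le_e h

lemma le_of_neg_le_neg {x y : A} (h : mvle (mvneg y) (mvneg x)) : mvle x y := by
  have h' := neg_le_neg h
  rwa [mvneg_mvneg, mvneg_mvneg] at h'

lemma neg_odot (x y : A) : mvneg (odot x y) = oplus (mvneg x) (mvneg y) := by
  simp [odot, mvneg_mvneg]

lemma odot_comm (x y : A) : odot x y = odot y x := by
  simp [odot, oplus_comm]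

lemma odot_assoc (x y z : A) : odot (odot x y) z = odot x (odot y z) := by
  simp [odot, mvneg_mvneg, oplus_assoc]

lemma odot_top (x : A) : odot x top = x := by
  simp [odot, top, mvneg_mvneg, oplus_zero]

lemma top_odot (x : A) : odot top x = x := by rw [odot_comm, odot_top]

lemma odot_le_left (x y : A) : mvle (odot x y) x := by
  show oplus (mvneg (odot x y)) x = top
  rw [neg_odot, oplus_comm (mvneg x), oplus_assoc, la, oplus_top']

lemma odot_le_right (x y : A) : mvle (odot x y) y := by
  rw [odot_comm]; exact odot_le_left y x

lemma odot_mono_left {x y : A} (h : mvle x y) (z : A) :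
    mvle (odot x z) (odot y z) := by
  apply le_of_neg_le_neg
  rw [neg_odot, neg_odot]
  exact oplus_le_oplus_right (neg_le_neg h) (mvneg z)

lemma odot_mono_right {x y : A} (h : mvle x y) (z : A) :
    mvle (odot z x) (odot z y) := by
  rw [odot_comm z x, odot_comm z y]; exact odot_mono_left h z

lemma neg_inf (x y : A) : mvneg (mvinf x y) = mvsup (mvneg x) (mvneg y) := by
  show mvneg (odot x (oplus (mvneg x) y)) = oplus (mvneg (oplus (mvneg (mvneg x)) (mvneg y))) (mvneg y)
  rw [neg_odot, mvneg_mvneg, oplus_comm (mvneg x), oplus_comm (mvneg x) y]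
  have h := luk (mvneg y) (mvneg x)
  rw [mvneg_mvneg, mvneg_mvneg] at h
  exact h

lemma inf_le_right (x y : A) : mvle (mvinf x y) y := by
  apply le_of_neg_le_neg
  rw [neg_inf]
  exact le_sup_right _ _

lemma mp_le (x y : A) : mvle (odot (imp x y) x) y := by
  rw [odot_comm]; exact inf_le_right x y

lemma le_imp_odot (a b : A) : mvle a (imp b (odot b a)) := by
  show oplus (mvneg a) (oplus (mvneg b) (mvneg (oplus (mvneg b) (mvneg a)))) = top
  rw [← oplus_assoc, oplus_comm (mvneg a) (mvneg b), oplus_comm]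
  exact la _

lemma imp_le_imp_right {x y : A} (h : mvle x y) (z : A) : mvle (imp z x) (imp z y) :=
  oplus_le_oplus_left h (mvneg z)

lemma odot_le_of_le_imp {a b c : A} (h : mvle a (imp b c)) : mvle (odot a b) c :=
  mle_trans (odot_mono_left h b) (mp_le b c)

lemma sup_le {x y z : A} (hx : mvle x z) (hy : mvle y z) : mvle (mvsup x y) z := by
  have h1 : mvle (oplus (mvneg z) y) (oplus (mvneg x) y) :=
    oplus_le_oplus_right (neg_le_neg hx) y
  have h2 := oplus_le_oplus_right (neg_le_neg h1) y
  have hz := eq_sup_of_le hy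
  show mvle (mvsup x y) z
  rw [hz]
  exact h2

lemma inf_eq_of_le {x m : A} (h : mvle x m) : mvinf m x = x := by
  apply neg_inj
  rw [neg_inf, sup_eq_right (neg_le_neg h)]

lemma neg_sup_odot (x y : A) :
    mvneg (odot (mvsup x y) (mvneg y)) = oplus (mvneg x) y := by
  have h := luk (oplus (mvneg x) y) y
  rw [oplus_left_comm (mvneg y), la, oplus_top', neg_top, zero_oplus] at h
  show mvneg (mvneg (oplus (mvneg (oplus (mvneg (oplus (mvneg x) y)) y)) (mvneg (mvneg y)))) = _
  rw [mvneg_mvneg, mvneg_mvneg]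
  exact h

lemma sup_odot_neg (x y : A) :
    odot (mvsup x y) (mvneg y) = mvneg (oplus (mvneg x) y) := by
  apply neg_inj
  rw [neg_sup_odot, mvneg_mvneg]

lemma key_sub (x y : A) :
    odot (mvneg (oplus (mvneg x) y)) (oplus (mvneg y) x) = mvneg (oplus (mvneg x) y) := by
  have he : oplus (mvneg y) x = oplus (mvneg (mvsup y x)) x := by
    conv_lhs => rw [← mvneg_mvneg (oplus (mvneg y) x), ← sup_odot_neg y x]
    rw [neg_odot, mvneg_mvneg]
  have hinf : odot (mvsup x y) (oplus (mvneg (mvsup x y)) x) = x :=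
    inf_eq_of_le (le_sup_left x y)
  conv_lhs =>
    rw [← sup_odot_neg x y, he, sup_comm y x,
      odot_comm (mvsup x y) (mvneg y), odot_assoc, hinf]
  simp [odot, mvneg_mvneg, oplus_comm]

lemma prelinear (x y : A) : mvsup (imp x y) (imp y x) = top := by
  show oplus (mvneg (oplus (mvneg (oplus (mvneg x) y)) (oplus (mvneg y) x))) (oplus (mvneg y) x) = top
  have h := key_sub y x
  rw [show odot (mvneg (oplus (mvneg y) x)) (oplus (mvneg x) y)
      = mvneg (oplus (oplus (mvneg y) x) (mvneg (oplus (mvneg x) y))) from by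
    rw [odot, mvneg_mvneg]] at h
  rw [oplus_comm (oplus (mvneg y) x)] at h
  rw [h]
  exact la _

lemma odot_sup_le (a b c : A) :
    mvle (odot (mvsup b c) a) (mvsup (odot a b) (odot a c)) := by
  apply odot_le_of_le_imp
  apply sup_le
  · exact mle_trans (le_imp_odot b a) (imp_le_imp_right (le_sup_left _ _) a)
  · exact mle_trans (le_imp_odot c a) (imp_le_imp_right (le_sup_right _ _) a)

lemma sup_odot_one {u v w : A} (hv : mvsup u v = top) (hw : mvsup u w = top) :
    mvsup u (odot v w) = top := by
  have hstart : mvle (odot (mvsup u v) (mvsup u w))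
      (mvsup (odot (mvsup u v) u) (odot (mvsup u v) w)) := by
    rw [odot_comm]; exact odot_sup_le (mvsup u v) u w
  have hA : mvle (odot (mvsup u v) u) (mvsup u (odot v w)) :=
    mle_trans (odot_le_right _ _) (le_sup_left _ _)
  have hB : mvle (odot (mvsup u v) w) (mvsup u (odot v w)) := by
    refine mle_trans (odot_sup_le w u v) (sup_le ?_ ?_)
    · exact mle_trans (odot_le_right w u) (le_sup_left _ _)
    · rw [odot_comm w v]; exact le_sup_right _ _
  have hend := mle_trans hstart (sup_le hA hB)
  rw [hv, hw, odot_top] at hend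
  exact mtop_le hend

lemma sup_sq {u v : A} (hu : mvsup u v = top) :
    mvsup (odot u u) (odot v v) = top := by
  have h1 : mvsup u (odot v v) = top := sup_odot_one hu hu
  have h2 : mvsup (odot v v) u = top := by rw [sup_comm]; exact h1
  have h3 : mvsup (odot v v) (odot u u) = top := sup_odot_one h2 h2
  rw [sup_comm]; exact h3

def mvpow (a : A) : ℕ → A
  | 0 => top
  | n + 1 => odot a (mvpow a n)

lemma mvpow_zero (a : A) : mvpow a 0 = top := rfl
lemma mvpow_succ (a : A) (n : ℕ) : mvpow a (n + 1) = odot a (mvpow a n) := rfl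
lemma mvpow_one (a : A) : mvpow a 1 = a := by rw [mvpow_succ, mvpow_zero, odot_top]

lemma mvpow_add (a : A) (m n : ℕ) :
    mvpow a (m + n) = odot (mvpow a m) (mvpow a n) := by
  induction m with
  | zero => rw [Nat.zero_add, mvpow_zero, top_odot]
  | succ k ih =>
      rw [show k + 1 + n = (k + n) + 1 from by omega, mvpow_succ, ih, mvpow_succ, odot_assoc]

lemma mvpow_top (n : ℕ) : mvpow (top : A) n = top := by
  induction n with
  | zero => rfl
  | succ k ih => rw [mvpow_succ, ih, odot_top]

lemma mvpow_le_of_le {a : A} {n N : ℕ} (h : n ≤ N) : mvle (mvpow a N) (mvpow a n) := by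
  obtain ⟨k, rfl⟩ := Nat.exists_eq_add_of_le h
  rw [mvpow_add]
  exact odot_le_left _ _

lemma mvpow_sup {b c : A} (h : mvsup b c = top) (j : ℕ) :
    mvsup (mvpow b (2 ^ j)) (mvpow c (2 ^ j)) = top := by
  induction j with
  | zero => rw [pow_zero, mvpow_one, mvpow_one]; exact h
  | succ k ih =>
      rw [show 2 ^ (k + 1) = 2 ^ k + 2 ^ k from by rw [pow_succ]; omega,
        mvpow_add, mvpow_add]
      exact sup_sq ih

section Tau

variable {τ : A → A} (h : IsSMMV τ)
include h

lemma tau_top : τ top = top := h.1.map_top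

lemma tau_zero : τ (0 : A) = 0 := by
  have h0 : τ (0 : A) = τ (mvneg (mvneg 0)) := by rw [mvneg_mvneg]
  rw [h0, h.1.map_neg]
  show mvneg (τ top) = 0
  rw [tau_top h, neg_top]

lemma tau_idem (x : A) : τ (τ x) = τ x := by
  have hfix := h.1.tau_fix x 0
  rwa [tau_zero h, oplus_zero] at hfix

lemma tau_mono {x y : A} (hxy : mvle x y) : mvle (τ x) (τ y) := by
  show oplus (mvneg (τ x)) (τ y) = top
  rw [← h.1.map_neg, ← h.2, le_e hxy, tau_top h]

lemma tau_odot (x y : A) : τ (odot x y) = odot (τ x) (τ y) := by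
  simp [odot, h.1.map_neg, h.2]

lemma tau_pow (b : A) (n : ℕ) : τ (mvpow b n) = mvpow (τ b) n := by
  induction n with
  | zero => rw [mvpow_zero, mvpow_zero]; exact tau_top h
  | succ k ih => rw [mvpow_succ, mvpow_succ, tau_odot h, ih]

end Tau

def genFilter (b : A) : Set A := {x | ∃ n : ℕ, mvle (mvpow b n) x}

lemma genFilter_isFilter (b : A) : IsFilter (genFilter b) := by
  constructor
  · exact ⟨0, mle_top _⟩
  · rintro a c ⟨n, hn⟩ ⟨m, hm⟩
    refine ⟨n + m, ?_⟩
    have h1 : mvle (mvpow b (n + m)) (odot a (imp a c)) := by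
      rw [mvpow_add]
      exact mle_trans (odot_mono_left hn _) (odot_mono_right hm a)
    exact mle_trans h1 (inf_le_right a c)

lemma mem_genFilter_self (b : A) : b ∈ genFilter b :=
  ⟨1, by rw [mvpow_one]; exact mle_refl b⟩

lemma genFilter_tau {τ : A → A} (h : IsSMMV τ) {b : A} (hb : τ b = top) :
    ∀ a ∈ genFilter b, τ a ∈ genFilter b := by
  rintro a ⟨n, hn⟩
  have h1 : mvle (mvpow (τ b) n) (τ a) := by
    rw [← tau_pow h]
    exact tau_mono h hn
  rw [hb, mvpow_top] at h1
  have h2 : τ a = top := mtop_le h1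
  rw [h2]
  exact ⟨0, mle_top _⟩

lemma genFilter_ne {b : A} (hb : b ≠ top) : genFilter b ≠ {top} := by
  intro heq
  have hmem := mem_genFilter_self b
  rw [heq] at hmem
  exact hb hmem

end MVThm

/-- In a subdirectly irreducible SMMV-algebra, every element is
comparable with its image under `τ`. -/
theorem comparable_with_tau {A : Type*} [MV A] (τ : A → A)
    (h : IsSMMV τ) (hsi : SubdirIrrSMV τ) (a : A) :
    mvle a (τ a) ∨ mvle (τ a) a := by
  classical
  by_contra hcon
  push_neg at hcon
  obtain ⟨hb, hc⟩ := hcon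
  have hbne : imp a (τ a) ≠ top := hb
  have hcne : imp (τ a) a ≠ top := hc
  have htb : τ (imp a (τ a)) = top := by
    show τ (oplus (mvneg a) (τ a)) = top
    rw [h.2, h.1.map_neg, MVThm.tau_idem h, MVThm.la]
  have htc : τ (imp (τ a) a) = top := by
    show τ (oplus (mvneg (τ a)) a) = top
    rw [h.2, h.1.map_neg, MVThm.tau_idem h, MVThm.la]
  obtain ⟨F, hFt, hFne, hFmin⟩ := hsi
  have hFb : F ⊆ MVThm.genFilter (imp a (τ a)) :=
    hFmin _ ⟨MVThm.genFilter_isFilter _, MVThm.genFilter_tau h htb⟩ (MVThm.genFilter_ne hbne)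
  have hFc : F ⊆ MVThm.genFilter (imp (τ a) a) :=
    hFmin _ ⟨MVThm.genFilter_isFilter _, MVThm.genFilter_tau h htc⟩ (MVThm.genFilter_ne hcne)
  have hm : ∃ m ∈ F, m ≠ top := by
    by_contra h'
    push_neg at h'
    exact hFne (Set.eq_singleton_iff_unique_mem.mpr ⟨hFt.1.top_mem, h'⟩)
  obtain ⟨m, hmF, hmne⟩ := hm
  obtain ⟨n, hn⟩ := hFb hmF
  obtain ⟨k, hk⟩ := hFc hmF
  set N := 2 ^ (n + k) with hN
  have hnN : n ≤ N := le_of_lt (lt_of_le_of_lt (Nat.le_add_right n k) Nat.lt_two_pow_self)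
  have hkN : k ≤ N := le_of_lt (lt_of_le_of_lt (Nat.le_add_left k n) Nat.lt_two_pow_self)
  have h1 : mvle (MVThm.mvpow (imp a (τ a)) N) m :=
    MVThm.mle_trans (MVThm.mvpow_le_of_le hnN) hn
  have h2 : mvle (MVThm.mvpow (imp (τ a) a) N) m :=
    MVThm.mle_trans (MVThm.mvpow_le_of_le hkN) hk
  have hsup : mvsup (MVThm.mvpow (imp a (τ a)) N) (MVThm.mvpow (imp (τ a) a) N) = top :=
    MVThm.mvpow_sup (MVThm.prelinear a (τ a)) (n + k)
  have hfin : mvle top m := by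
    rw [← hsup]
    exact MVThm.sup_le h1 h2
  exact hmne (MVThm.mtop_le hfin)
end

section
/- The variety of SMMV-algebras has the congruence extension property: if (A, τ) is a subalgebra of (B, τ) and θ is a congruence on (A, τ), then θ extends to a congruence on (B, τ) whose restriction to A is θ. -/
open MV

/-- A congruence of an SMMV-algebra `(A, τ)`. -/
structure IsSMMVCong {A : Type*} [MV A] (τ : A → A) (θ : A → A → Prop) : Prop where
  refl : ∀ a : A, θ a a
  symm : ∀ a b : A, θ a b → θ b a
  trans : ∀ a b c : A, θ a b → θ b c → θ a c
  oplus_compat : ∀ a b c d : A, θ a b → θ c d → θ (oplus a c) (oplus b d)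
  neg_compat : ∀ a b : A, θ a b → θ (mvneg a) (mvneg b)
  tau_compat : ∀ a b : A, θ a b → θ (τ a) (τ b)


namespace SMMVCep

open MV

variable {A : Type*} [MV A]

instance : Std.Associative (MV.oplus (A := A)) := ⟨MV.oplus_assoc⟩
instance : Std.Commutative (MV.oplus (A := A)) := ⟨MV.oplus_comm⟩

lemma zero_oplus (x : A) : oplus 0 x = x := by rw [oplus_comm, oplus_zero]

lemma neg_top : mvneg (top : A) = 0 := MV.mvneg_mvneg 0

lemma oplus_top' (x : A) : oplus (top : A) x = top := by
  rw [oplus_comm]; exact MV.oplus_top x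

lemma oplus_top'' (x : A) : oplus x (top : A) = top := MV.oplus_top x

lemma neg_oplus_self (x : A) : oplus (mvneg x) x = top := by
  have h := MV.luk (top : A) x
  rw [neg_top, zero_oplus, oplus_top''] at h
  exact h

lemma imp_self (x : A) : imp x x = top := neg_oplus_self x

lemma le_refl' (x : A) : mvle x x := imp_self x

lemma le_top (x : A) : mvle x (top : A) := oplus_top'' _

lemma top_le {x : A} (h : mvle (top : A) x) : x = top := by
  unfold mvle imp at h
  rwa [neg_top, zero_oplus] at h

lemma odot_top (x : A) : odot x (top : A) = x := by
  unfold odot; rw [neg_top, oplus_zero, mvneg_mvneg]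

lemma odot_comm (x y : A) : odot x y = odot y x := by
  unfold odot; rw [oplus_comm]

lemma odot_assoc (x y z : A) : odot (odot x y) z = odot x (odot y z) := by
  unfold odot; rw [mvneg_mvneg, mvneg_mvneg, oplus_assoc]

instance : Std.Associative (MV.odot (A := A)) := ⟨odot_assoc⟩
instance : Std.Commutative (MV.odot (A := A)) := ⟨odot_comm⟩

lemma ominus_oplus_of_le {a b : A} (h : mvle a b) : oplus (ominus b a) a = b := by
  have hl := MV.luk a b
  have h' : oplus (mvneg a) b = top := h
  rw [h', neg_top, zero_oplus] at hl
  exact hl.symm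

lemma oplus_le_oplus_left {a b : A} (c : A) (h : mvle a b) :
    mvle (oplus a c) (oplus b c) := by
  unfold mvle imp
  conv_lhs => rw [← ominus_oplus_of_le h]
  rw [show oplus (mvneg (oplus a c)) (oplus (oplus (ominus b a) a) c)
      = oplus (ominus b a) (oplus (mvneg (oplus a c)) (oplus a c)) from by ac_rfl,
    neg_oplus_self, oplus_top'']

lemma oplus_le_oplus_right {a b : A} (c : A) (h : mvle a b) :
    mvle (oplus c a) (oplus c b) := by
  rw [oplus_comm c a, oplus_comm c b]; exact oplus_le_oplus_left c h

lemma le_trans' {a b c : A} (h1 : mvle a b) (h2 : mvle b c) : mvle a c := by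
  have h3 := oplus_le_oplus_right (mvneg a) h2
  have h1' : oplus (mvneg a) b = top := h1
  unfold mvle imp at h3 ⊢
  rw [h1'] at h3
  exact top_le h3

lemma neg_le_neg {a b : A} (h : mvle a b) : mvle (mvneg b) (mvneg a) := by
  have h' : oplus (mvneg a) b = top := h
  show oplus (mvneg (mvneg b)) (mvneg a) = top
  rw [mvneg_mvneg, oplus_comm]
  exact h'

lemma odot_le_odot {a b c d : A} (h1 : mvle a b) (h2 : mvle c d) :
    mvle (odot a c) (odot b d) := by
  unfold odot
  apply neg_le_neg
  exact le_trans' (oplus_le_oplus_left _ (neg_le_neg h1))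
    (oplus_le_oplus_right _ (neg_le_neg h2))

lemma sneg (x y : A) : mvle (mvneg y) (oplus (mvneg (oplus (mvneg x) y)) (mvneg x)) := by
  show oplus (mvneg (mvneg y)) (oplus (mvneg (oplus (mvneg x) y)) (mvneg x)) = top
  rw [mvneg_mvneg]
  rw [show oplus y (oplus (mvneg (oplus (mvneg x) y)) (mvneg x))
      = oplus (oplus (mvneg (oplus (mvneg x) y)) y) (mvneg x) from by ac_rfl,
    MV.luk, oplus_assoc, oplus_comm x (mvneg x), neg_oplus_self, oplus_top'']

lemma odot_le_left (x y : A) : mvle (odot x y) x := by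
  show oplus (mvneg (mvneg (oplus (mvneg x) (mvneg y)))) x = top
  rw [mvneg_mvneg,
    show oplus (oplus (mvneg x) (mvneg y)) x = oplus (mvneg y) (oplus (mvneg x) x) from by
      ac_rfl,
    neg_oplus_self, oplus_top'']

lemma odot_le_right (x y : A) : mvle (odot x y) y := by
  rw [odot_comm]; exact odot_le_left y x

lemma odot_imp_le (a b : A) : mvle (odot (imp a b) a) b := by
  show oplus (mvneg (mvneg (oplus (mvneg (imp a b)) (mvneg a)))) b = top
  rw [mvneg_mvneg, oplus_assoc]
  show oplus (mvneg (imp a b)) (imp a b) = top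
  exact neg_oplus_self _

lemma le_imp_odot (x y : A) : mvle x (imp y (odot x y)) := by
  show oplus (mvneg x) (oplus (mvneg y) (mvneg (oplus (mvneg x) (mvneg y)))) = top
  rw [← oplus_assoc, oplus_comm (oplus (mvneg x) (mvneg y))]
  exact neg_oplus_self _

lemma imp_le_imp_right {b c : A} (a : A) (h : mvle b c) : mvle (imp a b) (imp a c) :=
  oplus_le_oplus_right _ h

lemma residuation {x y z : A} (h : mvle (odot x y) z) : mvle x (imp y z) :=
  le_trans' (le_imp_odot x y) (imp_le_imp_right y h)

lemma odot_oplus_le (x a c : A) : mvle (odot x (oplus a c)) (oplus (odot x a) c) := by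
  have h1 : mvle (mvneg a) (oplus (mvneg (oplus a c)) c) := by
    have h := sneg (mvneg c) a
    rwa [mvneg_mvneg, oplus_comm c a] at h
  show oplus (mvneg (mvneg (oplus (mvneg x) (mvneg (oplus a c)))))
      (oplus (mvneg (oplus (mvneg x) (mvneg a))) c) = top
  rw [mvneg_mvneg]
  have h2 := oplus_le_oplus_right
    (oplus (mvneg (oplus (mvneg x) (mvneg a))) (mvneg x)) h1
  rw [show oplus (oplus (mvneg (oplus (mvneg x) (mvneg a))) (mvneg x)) (mvneg a)
      = oplus (mvneg (oplus (mvneg x) (mvneg a))) (oplus (mvneg x) (mvneg a)) from by ac_rfl,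
    neg_oplus_self] at h2
  have h3 := top_le h2
  rw [← h3]
  ac_rfl

lemma trans_ineq (x y z : A) : mvle (odot (imp x y) (imp y z)) (imp x z) := by
  apply residuation
  rw [show odot (odot (imp x y) (imp y z)) x = odot (imp y z) (odot (imp x y) x) from by
    ac_rfl]
  exact le_trans' (odot_le_odot (le_refl' _) (odot_imp_le x y)) (odot_imp_le y z)

lemma oplus_imp_ineq (a b c d : A) :
    mvle (odot (imp a b) (imp c d)) (imp (oplus a c) (oplus b d)) := by
  apply residuation
  rw [show odot (odot (imp a b) (imp c d)) (oplus a c)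
      = odot (imp c d) (odot (imp a b) (oplus a c)) from by ac_rfl]
  have s1 : mvle (odot (imp a b) (oplus a c)) (oplus b c) :=
    le_trans' (odot_oplus_le _ _ _) (oplus_le_oplus_left c (odot_imp_le a b))
  have s2 : mvle (odot (imp c d) (odot (imp a b) (oplus a c)))
      (odot (imp c d) (oplus c b)) := by
    rw [oplus_comm c b]; exact odot_le_odot (le_refl' _) s1
  refine le_trans' s2 (le_trans' (odot_oplus_le _ _ _) ?_)
  rw [oplus_comm b d]
  exact oplus_le_oplus_left b (odot_imp_le c d)

lemma inf_comm (a b : A) : odot a (imp a b) = odot b (imp b a) := by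
  show mvneg (oplus (mvneg a) (mvneg (oplus (mvneg a) b)))
      = mvneg (oplus (mvneg b) (mvneg (oplus (mvneg b) a)))
  have h := MV.luk (mvneg b) (mvneg a)
  rw [mvneg_mvneg, mvneg_mvneg] at h
  rw [oplus_comm b (mvneg a), oplus_comm a (mvneg b)] at h
  rw [oplus_comm (mvneg a) (mvneg (oplus (mvneg a) b)),
    oplus_comm (mvneg b) (mvneg (oplus (mvneg b) a))]
  exact congrArg mvneg h

/-- The MV-distance-like term `d(a,b) = (a→b) ⊙ (b→a)`. -/
def dd (a b : A) : A := odot (imp a b) (imp b a)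

lemma dd_self (a : A) : dd a a = top := by
  rw [dd, imp_self, odot_top]

lemma dd_comm (a b : A) : dd a b = dd b a := odot_comm _ _

lemma dd_neg (a b : A) : dd (mvneg a) (mvneg b) = dd a b := by
  unfold dd imp
  rw [mvneg_mvneg, mvneg_mvneg, oplus_comm a (mvneg b), oplus_comm b (mvneg a), odot_comm]

lemma dd_trans_le (a b c : A) : mvle (odot (dd a b) (dd b c)) (dd a c) := by
  unfold dd
  rw [show odot (odot (imp a b) (imp b a)) (odot (imp b c) (imp c b))
      = odot (odot (imp a b) (imp b c)) (odot (imp c b) (imp b a)) from by ac_rfl]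
  exact odot_le_odot (trans_ineq a b c) (trans_ineq c b a)

lemma dd_oplus_le (a b c d : A) :
    mvle (odot (dd a b) (dd c d)) (dd (oplus a c) (oplus b d)) := by
  unfold dd
  rw [show odot (odot (imp a b) (imp b a)) (odot (imp c d) (imp d c))
      = odot (odot (imp a b) (imp c d)) (odot (imp b a) (imp d c)) from by ac_rfl]
  exact odot_le_odot (oplus_imp_ineq a b c d) (oplus_imp_ineq b a d c)

section Cong

variable {τ : A → A} {θ : A → A → Prop} (hθ : IsSMMVCong τ θ)
include hθ

lemma cong_odot {a b c d : A} (h1 : θ a b) (h2 : θ c d) : θ (odot a c) (odot b d) :=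
  hθ.neg_compat _ _ (hθ.oplus_compat _ _ _ _ (hθ.neg_compat _ _ h1) (hθ.neg_compat _ _ h2))

lemma cong_top_mono {c x : A} (h : θ c top) (hle : mvle c x) : θ x top := by
  have h1 : θ (oplus (mvneg c) x) (oplus (mvneg top) x) :=
    hθ.oplus_compat _ _ _ _ (hθ.neg_compat _ _ h) (hθ.refl x)
  rw [neg_top, zero_oplus, show oplus (mvneg c) x = top from hle] at h1
  exact hθ.symm _ _ h1

lemma cong_of_dd {a b : A} (h : θ (dd a b) top) : θ a b := by
  have hab : θ (imp a b) top := cong_top_mono hθ h (odot_le_left _ _)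
  have hba : θ (imp b a) top := cong_top_mono hθ h (odot_le_right _ _)
  have h1 : θ (odot a (imp a b)) (odot a top) := cong_odot hθ (hθ.refl a) hab
  have h2 : θ (odot b (imp b a)) (odot b top) := cong_odot hθ (hθ.refl b) hba
  rw [odot_top] at h1
  rw [odot_top, ← inf_comm a b] at h2
  exact hθ.trans _ _ _ (hθ.symm _ _ h1) h2

lemma dd_of_cong {a b : A} (h : θ a b) : θ (dd a b) top := by
  have hab : θ (oplus (mvneg a) b) (oplus (mvneg b) b) :=
    hθ.oplus_compat _ _ _ _ (hθ.neg_compat _ _ h) (hθ.refl b)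
  have hba : θ (oplus (mvneg b) a) (oplus (mvneg a) a) :=
    hθ.oplus_compat _ _ _ _ (hθ.neg_compat _ _ (hθ.symm _ _ h)) (hθ.refl a)
  rw [neg_oplus_self] at hab hba
  have h2 := cong_odot hθ hab hba
  rw [odot_top] at h2
  exact h2

end Cong

section Hom

variable {B : Type*} [MV B] {f : A → B} (hf : IsMVHom f)
include hf

lemma hom_top : f (top : A) = top := by
  show f (mvneg 0) = mvneg 0
  rw [hf.map_neg, hf.map_zero]

lemma hom_imp (a b : A) : f (imp a b) = imp (f a) (f b) := by
  unfold imp; rw [hf.map_oplus, hf.map_neg]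

lemma hom_odot (a b : A) : f (odot a b) = odot (f a) (f b) := by
  unfold odot; rw [hf.map_neg, hf.map_oplus, hf.map_neg, hf.map_neg]

lemma hom_dd (a b : A) : f (dd a b) = dd (f a) (f b) := by
  unfold dd; rw [hom_odot hf, hom_imp hf, hom_imp hf]

lemma hom_le {a b : A} (h : mvle a b) : mvle (f a) (f b) := by
  show imp (f a) (f b) = top
  rw [← hom_imp hf, show imp a b = top from h, hom_top hf]

end Hom

lemma smmv_hom {τ : A → A} (h : IsSMMV τ) : IsMVHom τ :=
  ⟨h.2, h.1.map_neg, by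
    rw [show (0 : A) = mvneg top from neg_top.symm, h.1.map_neg, h.1.map_top, neg_top]⟩

end SMMVCep

open SMMVCep

/-- the variety of SMMV-algebras has the congruence extension
property: any congruence on a subalgebra `(A, τA)` of `(B, τB)` (the inclusion
being given by an embedding `f`) extends to a congruence of `(B, τB)` restricting
back to the original congruence. -/
theorem smmv_congruence_extension {A B : Type*} [MV A] [MV B]
    (τA : A → A) (τB : B → B) (hA : IsSMMV τA) (hB : IsSMMV τB)
    (f : A → B) (hf : IsMVHom f) (hinj : Function.Injective f)
    (hτ : ∀ a : A, f (τA a) = τB (f a))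
    (θ : A → A → Prop) (hθ : IsSMMVCong τA θ) :
    ∃ ψ : B → B → Prop, IsSMMVCong τB ψ ∧ ∀ a a' : A, ψ (f a) (f a') ↔ θ a a' := by
  have hτBhom : IsMVHom τB := smmv_hom hB
  refine ⟨fun b b' => ∃ c : A, θ c top ∧ mvle (f c) (dd b b'), ⟨?_, ?_, ?_, ?_, ?_, ?_⟩, ?_⟩
  · -- refl
    intro b
    exact ⟨top, hθ.refl top, by rw [hom_top hf, dd_self]; exact le_refl' _⟩
  · -- symm
    rintro b b' ⟨c, hc1, hc2⟩
    exact ⟨c, hc1, by rw [dd_comm]; exact hc2⟩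
  · -- trans
    rintro b b' b'' ⟨c, hc1, hc2⟩ ⟨c', hc1', hc2'⟩
    refine ⟨odot c c', ?_, ?_⟩
    · have h := cong_odot hθ hc1 hc1'
      rwa [odot_top] at h
    · rw [hom_odot hf]
      exact le_trans' (odot_le_odot hc2 hc2') (dd_trans_le b b' b'')
  · -- oplus_compat
    rintro a b c d ⟨c1, h11, h12⟩ ⟨c2, h21, h22⟩
    refine ⟨odot c1 c2, ?_, ?_⟩
    · have h := cong_odot hθ h11 h21
      rwa [odot_top] at h
    · rw [hom_odot hf]
      exact le_trans' (odot_le_odot h12 h22) (dd_oplus_le a b c d)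
  · -- neg_compat
    rintro a b ⟨c, hc1, hc2⟩
    exact ⟨c, hc1, by rw [dd_neg]; exact hc2⟩
  · -- tau_compat
    rintro a b ⟨c, hc1, hc2⟩
    refine ⟨τA c, ?_, ?_⟩
    · have h := hθ.tau_compat _ _ hc1
      rwa [hA.1.map_top] at h
    · rw [hτ, ← hom_dd hτBhom]
      exact hom_le hτBhom hc2
  · -- restriction
    intro a a'
    constructor
    · rintro ⟨c, hc1, hc2⟩
      rw [← hom_dd hf] at hc2
      have hle : mvle c (dd a a') := by
        have h' : imp (f c) (f (dd a a')) = top := hc2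
        rw [← hom_imp hf, ← hom_top hf] at h'
        exact hinj h'
      exact cong_of_dd hθ (cong_top_mono hθ hc1 hle)
    · intro h
      exact ⟨dd a a', dd_of_cong hθ h, by rw [hom_dd hf]; exact le_refl' _⟩
end

section
/- For elements a¹ᵢ, a²ᵢ, b¹, b² of [0,1] and any SMMV-term t(x₁,…,xₙ), the equation t((a₁¹,a₁²),…,(aₙ¹,aₙ²)) = (b¹,b²) holds in D([0,1]_MV) if and only if tⁱ(a₁¹,a₁²,…,aₙ¹,aₙ²) = bⁱ holds in [0,1]_MV for i = 1,2, where the translation t ↦ (t¹, t²) is defined recursively by: xᵢ ↦ (xᵢ¹, xᵢ²); 0 ↦ (0,0); (¬s)ⁱ = ¬sⁱ; (s ⊕ u)ⁱ = sⁱ ⊕ uⁱ; and (τ(s))¹ = (τ(s))² = s¹. -/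
open MV

/-- Terms in the language of SMMV-algebras. -/
inductive SMMVTerm where
  | var : ℕ → SMMVTerm
  | zero : SMMVTerm
  | neg : SMMVTerm → SMMVTerm
  | oplus : SMMVTerm → SMMVTerm → SMMVTerm
  | tau : SMMVTerm → SMMVTerm

/-- Terms in the language of MV-algebras. -/
inductive MVTerm where
  | var : ℕ → MVTerm
  | zero : MVTerm
  | neg : MVTerm → MVTerm
  | oplus : MVTerm → MVTerm → MVTerm

/-- Truncated addition on `[0,1]_MV`. -/
noncomputable def rOplus (r s : ℝ) : ℝ := min (r + s) 1
/-- Negation on `[0,1]_MV`. -/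
def rNeg (r : ℝ) : ℝ := 1 - r

/-- Evaluation of MV-terms in the standard MV-algebra `[0,1]_MV`. -/
noncomputable def evalMV (σ : ℕ → ℝ) : MVTerm → ℝ
  | .var n => σ n
  | .zero => 0
  | .neg t => rNeg (evalMV σ t)
  | .oplus s u => rOplus (evalMV σ s) (evalMV σ u)

/-- Evaluation of SMMV-terms in `D([0,1]_MV)`: operations are componentwise and
`τ (a, b) = (a, a)`. -/
noncomputable def evalD (σ : ℕ → ℝ × ℝ) : SMMVTerm → ℝ × ℝ
  | .var n => σ n
  | .zero => (0, 0)
  | .neg t => (rNeg (evalD σ t).1, rNeg (evalD σ t).2)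
  | .oplus s u => (rOplus (evalD σ s).1 (evalD σ u).1, rOplus (evalD σ s).2 (evalD σ u).2)
  | .tau t => ((evalD σ t).1, (evalD σ t).1)

/-- The translation `t ↦ (t¹, t²)`: variable `xᵢ` maps to `(xᵢ¹, xᵢ²)` (coded as
variables `2i` and `2i+1`), `0 ↦ (0,0)`, `(¬s)ⁱ = ¬sⁱ`, `(s ⊕ u)ⁱ = sⁱ ⊕ uⁱ`, and
`(τ s)¹ = (τ s)² = s¹`. -/
def trTerm : SMMVTerm → MVTerm × MVTerm
  | .var n => (.var (2 * n), .var (2 * n + 1))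
  | .zero => (.zero, .zero)
  | .neg t => (.neg (trTerm t).1, .neg (trTerm t).2)
  | .oplus s u => (.oplus (trTerm s).1 (trTerm u).1, .oplus (trTerm s).2 (trTerm u).2)
  | .tau t => ((trTerm t).1, (trTerm t).1)

lemma evalD_eq_trTerm (σ1 σ2 : ℕ → ℝ) (t : SMMVTerm) :
    evalD (fun n => (σ1 n, σ2 n)) t =
      (evalMV (fun m => if m % 2 = 0 then σ1 (m / 2) else σ2 (m / 2)) (trTerm t).1,
       evalMV (fun m => if m % 2 = 0 then σ1 (m / 2) else σ2 (m / 2)) (trTerm t).2) := by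
  induction t with
  | var n =>
    simp only [evalD, trTerm, evalMV]
    rw [if_pos (by omega), if_neg (by omega)]
    have h1 : 2 * n / 2 = n := by omega
    have h2 : (2 * n + 1) / 2 = n := by omega
    rw [h1, h2]
  | zero => simp [evalD, trTerm, evalMV]
  | neg t ih => simp [evalD, trTerm, evalMV, ih]
  | oplus s u ihs ihu => simp [evalD, trTerm, evalMV, ihs, ihu]
  | tau t ih => simp [evalD, trTerm, evalMV, ih]

/-- for elements `aᵢ¹, aᵢ², b¹, b²` of `[0,1]` and any SMMV-term
`t`, the equation `t((a₁¹,a₁²),…) = (b¹,b²)` holds in `D([0,1]_MV)` iff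
`tⁱ(a₁¹,a₁²,…) = bⁱ` holds in `[0,1]_MV` for `i = 1, 2`. -/
theorem diagonal_term_translation
    (σ1 σ2 : ℕ → ℝ) (hσ1 : ∀ n, σ1 n ∈ Set.Icc (0:ℝ) 1)
    (hσ2 : ∀ n, σ2 n ∈ Set.Icc (0:ℝ) 1)
    (b1 b2 : ℝ) (hb1 : b1 ∈ Set.Icc (0:ℝ) 1) (hb2 : b2 ∈ Set.Icc (0:ℝ) 1)
    (t : SMMVTerm) :
    evalD (fun n => (σ1 n, σ2 n)) t = (b1, b2) ↔
      (evalMV (fun m => if m % 2 = 0 then σ1 (m / 2) else σ2 (m / 2)) (trTerm t).1 = b1 ∧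
       evalMV (fun m => if m % 2 = 0 then σ1 (m / 2) else σ2 (m / 2)) (trTerm t).2 = b2) := by
  rw [evalD_eq_trTerm, Prod.ext_iff]
end

section
/- Let A be a local MV-algebra with unique maximal filter M. Then for every m ∈ M, ¬m ≤ m. -/
open MV

/-- A proper filter: a filter not containing `0`. -/
def IsProperFilter {A : Type*} [MV A] (F : Set A) : Prop :=
  MV.IsFilter F ∧ (0 : A) ∉ F

/-- A maximal filter: a proper filter maximal among proper filters. -/
def IsMaximalFilter {A : Type*} [MV A] (F : Set A) : Prop :=
  IsProperFilter F ∧ ∀ G : Set A, IsProperFilter G → F ⊆ G → G = F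


section AuxiliaryLemmas

namespace MVAux

open MV

variable {A : Type*} [MV A]

lemma top_def : (top : A) = mvneg 0 := rfl

instance : Std.Associative (MV.oplus (A := A)) := ⟨MV.oplus_assoc⟩
instance : Std.Commutative (MV.oplus (A := A)) := ⟨MV.oplus_comm⟩

lemma neg_neg (x : A) : mvneg (mvneg x) = x := MV.mvneg_mvneg x

lemma zero_oplus (x : A) : oplus 0 x = x := by
  rw [oplus_comm, oplus_zero]

lemma oplus_top' (x : A) : oplus x top = top := MV.oplus_top x

lemma top_oplus (x : A) : oplus top x = top := by
  rw [oplus_comm]; exact oplus_top' x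

lemma neg_top : (mvneg top : A) = 0 := by
  rw [top_def, neg_neg]

lemma neg_zero : (mvneg 0 : A) = top := rfl

/-- `¬x ⊕ x = 1`. -/
lemma neg_oplus_self (x : A) : oplus (mvneg x) x = top := by
  have h := MV.luk x (top : A)
  simp only [oplus_top', neg_top, zero_oplus] at h
  exact h.symm

lemma oplus_neg_self (x : A) : oplus x (mvneg x) = top := by
  rw [oplus_comm]; exact neg_oplus_self x

/-- `¬x ⊕ (x ⊕ z) = 1`. -/
lemma neg_oplus_oplus (x z : A) : oplus (mvneg x) (oplus x z) = top := by
  rw [← oplus_assoc, neg_oplus_self, top_oplus]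

lemma mvle_iff {x y : A} : mvle x y ↔ oplus (mvneg x) y = top := Iff.rfl

lemma mvle_refl (x : A) : mvle x x := neg_oplus_self x

lemma mvle_iff_exists {x y : A} : mvle x y ↔ ∃ z, y = oplus x z := by
  constructor
  · intro h
    have l := MV.luk y x
    have h' : oplus (mvneg x) y = top := h
    rw [h', neg_top, zero_oplus] at l
    refine ⟨mvneg (oplus (mvneg y) x), ?_⟩
    rw [oplus_comm] at l
    exact l.symm
  · rintro ⟨z, rfl⟩
    exact neg_oplus_oplus x z

lemma mvle_trans {x y z : A} (h1 : mvle x y) (h2 : mvle y z) : mvle x z := by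
  rw [mvle_iff_exists] at h1 h2 ⊢
  obtain ⟨u, rfl⟩ := h1
  obtain ⟨v, rfl⟩ := h2
  exact ⟨oplus u v, MV.oplus_assoc x u v⟩

lemma oplus_le_oplus_left {x y : A} (c : A) (h : mvle x y) :
    mvle (oplus c x) (oplus c y) := by
  rw [mvle_iff_exists] at h ⊢
  obtain ⟨z, rfl⟩ := h
  exact ⟨z, (MV.oplus_assoc c x z).symm⟩

lemma neg_le_neg {x y : A} (h : mvle x y) : mvle (mvneg y) (mvneg x) := by
  have h' : oplus (mvneg x) y = top := h
  show oplus (mvneg (mvneg y)) (mvneg x) = top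
  rw [neg_neg, oplus_comm]
  exact h'

lemma odot_comm (x y : A) : odot x y = odot y x := by
  unfold odot; rw [oplus_comm]

lemma neg_odot (x y : A) : mvneg (odot x y) = oplus (mvneg x) (mvneg y) := by
  unfold odot; rw [neg_neg]

lemma odot_top (x : A) : odot x top = x := by
  unfold odot; rw [neg_top, oplus_zero, neg_neg]

lemma odot_le_odot_right {x y : A} (c : A) (h : mvle x y) :
    mvle (odot x c) (odot y c) := by
  rw [odot_comm x c, odot_comm y c]
  exact neg_le_neg (oplus_le_oplus_left (mvneg c) (neg_le_neg h))

lemma odot_le_odot {x y u v : A} (h1 : mvle x y) (h2 : mvle u v) :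
    mvle (odot x u) (odot y v) := by
  have a1 : mvle (odot x u) (odot y u) := odot_le_odot_right u h1
  have a2 : mvle (odot y u) (odot y v) := by
    rw [odot_comm y u, odot_comm y v]
    exact odot_le_odot_right y h2
  exact mvle_trans a1 a2

lemma odot_le_right (x y : A) : mvle (odot x y) y := by
  show oplus (mvneg (odot x y)) y = top
  rw [neg_odot, MV.oplus_assoc, neg_oplus_self, oplus_top']

/-- Negated form of the Łukasiewicz axiom. -/
lemma nluk (a b : A) :
    odot (oplus (mvneg a) b) (mvneg b) = odot (oplus (mvneg b) a) (mvneg a) := by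
  unfold odot
  rw [neg_neg, neg_neg]
  exact congrArg mvneg (MV.luk a b)

/-- `(a → b) ⊙ a ≤ b` (modus ponens inequality). -/
lemma imp_odot_le (a b : A) : mvle (odot (imp a b) a) b := by
  have h := nluk (mvneg b) (mvneg a)
  rw [neg_neg, neg_neg] at h
  have e : odot (imp a b) a = odot (oplus a (mvneg b)) b := by
    show odot (oplus (mvneg a) b) a = odot (oplus a (mvneg b)) b
    rw [oplus_comm (mvneg a) b]
    rw [show (a : A) = mvneg (mvneg a) from (neg_neg a).symm] at h ⊢
    rw [h, oplus_comm]
  rw [e]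
  exact odot_le_right _ b

lemma mvle_zero {x : A} (h : mvle x 0) : x = 0 := by
  have h' : oplus (mvneg x) 0 = top := h
  rw [oplus_zero] at h'
  have := congrArg mvneg h'
  rwa [neg_neg, neg_top] at this

/-- Powers with respect to `⊙`. -/
def mvpow (a : A) : ℕ → A
  | 0 => top
  | n + 1 => odot a (mvpow a n)

/-- Multiples with respect to `⊕`. -/
def mvsmul (a : A) : ℕ → A
  | 0 => 0
  | n + 1 => oplus a (mvsmul a n)

lemma mvpow_one (a : A) : mvpow a 1 = a := odot_top a

lemma neg_mvpow (a : A) (n : ℕ) : mvneg (mvpow a n) = mvsmul (mvneg a) n := by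
  induction n with
  | zero => exact neg_top
  | succ n ih =>
    show mvneg (odot a (mvpow a n)) = oplus (mvneg a) (mvsmul (mvneg a) n)
    rw [neg_odot, ih]

lemma odot_assoc (a b c : A) : odot (odot a b) c = odot a (odot b c) := by
  unfold odot
  rw [neg_neg, neg_neg, MV.oplus_assoc]

lemma mvpow_add (a : A) (n k : ℕ) :
    mvpow a (n + k) = odot (mvpow a n) (mvpow a k) := by
  induction k with
  | zero =>
    show mvpow a n = odot (mvpow a n) top
    rw [odot_top]
  | succ k ih =>
    show odot a (mvpow a (n + k)) = odot (mvpow a n) (odot a (mvpow a k))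
    rw [ih, ← odot_assoc, ← odot_assoc, odot_comm a (mvpow a n)]

/-- Key identity (E1): `(2x ⊙ ¬x) ⊕ x = 2x`, from the Łukasiewicz axiom. -/
lemma E1 (x : A) :
    oplus (odot (oplus x x) (mvneg x)) x = oplus x x := by
  have h := MV.luk (oplus x x) x
  rw [neg_oplus_oplus x x, neg_top, zero_oplus] at h
  have e : odot (oplus x x) (mvneg x) = mvneg (oplus (mvneg (oplus x x)) x) := by
    unfold odot; rw [neg_neg]
  rw [e]
  exact h

/-- Key identity (E2): `(x ⊙ ¬(x²)) ⊕ x² = x`, from the Łukasiewicz axiom. -/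
lemma E2 (x : A) :
    oplus (odot x (mvneg (odot x x))) (odot x x) = x := by
  have h := MV.luk (odot x x) x
  have e0 : mvneg (odot x x) = oplus (mvneg x) (mvneg x) := neg_odot x x
  rw [e0] at h
  rw [MV.oplus_assoc, neg_oplus_self, oplus_top', neg_top, zero_oplus] at h
  have e1 : odot x (mvneg (odot x x)) = mvneg (oplus (mvneg x) (odot x x)) := by
    unfold odot; rw [neg_neg]
  rw [e1]
  exact h.symm

/-- Key identity (E3): `2x ⊙ ¬x = x ⊙ ¬(x²)`. -/
lemma E3 (x : A) :
    odot (oplus x x) (mvneg x) = odot x (mvneg (odot x x)) := by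
  have h := nluk (mvneg x) x
  rw [neg_neg] at h
  rw [h, ← neg_odot, odot_comm]

/-- The absorption law `2x ⊕ x² = 2x`. -/
lemma absorb (x : A) : oplus (oplus x x) (odot x x) = oplus x x := by
  have h2 : oplus (odot x (mvneg (odot x x))) (odot x x) = x := E2 x
  have h1 : oplus (odot x (mvneg (odot x x))) x = oplus x x := by
    rw [← E3 x]; exact E1 x
  set d := odot x (mvneg (odot x x)) with hd
  set a := odot x x with ha
  calc oplus (oplus x x) a
      = oplus (oplus d x) a := by rw [h1]
    _ = oplus (oplus d (oplus d a)) a := by rw [h2]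
    _ = oplus (oplus d a) (oplus d a) := by ac_rfl
    _ = oplus x x := by rw [h2]

lemma smul_absorb (x : A) : ∀ n : ℕ,
    oplus (oplus x x) (mvsmul (odot x x) n) = oplus x x
  | 0 => oplus_zero _
  | n + 1 => by
    show oplus (oplus x x) (oplus (odot x x) (mvsmul (odot x x) n)) = oplus x x
    rw [← MV.oplus_assoc, absorb, smul_absorb x n]

/-! ### Filter lemmas -/

lemma filter_odot_mem {F : Set A} (hF : IsFilter F) {a b : A}
    (ha : a ∈ F) (hb : b ∈ F) : odot a b ∈ F := by
  have h1 : imp a (imp b (odot a b)) = top := by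
    show oplus (mvneg a) (oplus (mvneg b) (mvneg (oplus (mvneg a) (mvneg b)))) = top
    rw [← MV.oplus_assoc]
    exact oplus_neg_self _
  have h2 : imp b (odot a b) ∈ F := hF.mp a _ ha (by rw [h1]; exact hF.top_mem)
  exact hF.mp b _ hb h2

/-- In a local MV-algebra every proper filter is contained in the maximal filter. -/
lemma proper_subset_of_local
    (hloc : ∃! M : Set A, IsMaximalFilter M)
    {M : Set A} (hM : IsMaximalFilter M)
    {F : Set A} (hFf : IsFilter F) (hF0 : (0 : A) ∉ F) : F ⊆ M := by
  set S : Set (Set A) := {G | IsFilter G ∧ (0 : A) ∉ G ∧ F ⊆ G} with hS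
  have hFS : F ∈ S := ⟨hFf, hF0, subset_rfl⟩
  have hchain : ∀ c ⊆ S, IsChain (· ⊆ ·) c → c.Nonempty →
      ∃ ub ∈ S, ∀ s ∈ c, s ⊆ ub := by
    rintro c hcS hc ⟨s0, hs0⟩
    refine ⟨⋃₀ c, ⟨⟨?_, ?_⟩, ?_, ?_⟩, fun s hs => Set.subset_sUnion_of_mem hs⟩
    · exact ⟨s0, hs0, (hcS hs0).1.top_mem⟩
    · rintro a b ⟨s1, hs1, ha⟩ ⟨s2, hs2, hab⟩
      rcases eq_or_ne s1 s2 with rfl | hne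
      · exact ⟨s1, hs1, (hcS hs1).1.mp a b ha hab⟩
      · rcases hc hs1 hs2 hne with h | h
        · exact ⟨s2, hs2, (hcS hs2).1.mp a b (h ha) hab⟩
        · exact ⟨s1, hs1, (hcS hs1).1.mp a b ha (h hab)⟩
    · rintro ⟨s1, hs1, h0⟩
      exact (hcS hs1).2.1 h0
    · exact fun x hx => ⟨s0, hs0, (hcS hs0).2.2 hx⟩
  obtain ⟨G, hFG, hGS, hGmaxS⟩ := zorn_subset_nonempty S hchain F hFS
  have hGmax : IsMaximalFilter G := by
    refine ⟨⟨hGS.1, hGS.2.1⟩, ?_⟩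
    intro H hH hGH
    have hHS : H ∈ S := ⟨hH.1, hH.2, hFG.trans hGH⟩
    exact Set.Subset.antisymm (hGmaxS hHS hGH) hGH
  obtain ⟨Mu, _, huniq⟩ := hloc
  have e1 : G = Mu := huniq G hGmax
  have e2 : M = Mu := huniq M hM
  rw [e2, ← e1]
  exact hFG

end MVAux

end AuxiliaryLemmas

/-- if `A` is a local MV-algebra (it has exactly one maximal
filter) with maximal filter `M`, then `¬m ≤ m` for every `m ∈ M`. -/
theorem local_neg_le {A : Type*} [MV A]
    (hloc : ∃! M : Set A, IsMaximalFilter M)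
    (M : Set A) (hM : IsMaximalFilter M) :
    ∀ m ∈ M, mvle (mvneg m) m := by
  intro m hm
  classical
  have hMf : IsFilter M := hM.1.1
  have hM0 : (0 : A) ∉ M := hM.1.2
  set g : A := mvneg (odot m m) with hg
  have hdich : ∃ k, MVAux.mvpow g k = (0 : A) := by
    by_contra hcon
    push_neg at hcon
    set F : Set A := {b : A | ∃ n, mvle (MVAux.mvpow g n) b} with hF
    have hFf : IsFilter F := by
      constructor
      · exact ⟨0, MVAux.mvle_refl top⟩
      · rintro a b ⟨n, hn⟩ ⟨j, hj⟩
        refine ⟨j + n, ?_⟩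
        rw [MVAux.mvpow_add]
        have h1 : mvle (odot (MVAux.mvpow g j) (MVAux.mvpow g n)) (odot (imp a b) a) :=
          MVAux.odot_le_odot hj hn
        exact MVAux.mvle_trans h1 (MVAux.imp_odot_le a b)
    have hF0 : (0 : A) ∉ F := by
      rintro ⟨n, hn⟩
      exact hcon n (MVAux.mvle_zero hn)
    have hsub : F ⊆ M := MVAux.proper_subset_of_local hloc hM hFf hF0
    have hgM : g ∈ M := hsub ⟨1, by rw [MVAux.mvpow_one]; exact MVAux.mvle_refl g⟩
    have hm2 : odot m m ∈ M := MVAux.filter_odot_mem hMf hm hm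
    have h0M : (0 : A) ∈ M := by
      have hx := MVAux.filter_odot_mem hMf hm2 hgM
      have e : odot (odot m m) g = 0 := by
        rw [hg]
        show mvneg (oplus (mvneg (odot m m)) (mvneg (mvneg (odot m m)))) = 0
        rw [MVAux.neg_neg, MVAux.neg_oplus_self, MVAux.neg_top]
      rwa [e] at hx
    exact hM0 h0M
  obtain ⟨k, hk⟩ := hdich
  have hsm : MVAux.mvsmul (odot m m) k = top := by
    have h := congrArg mvneg hk
    rw [MVAux.neg_mvpow, hg, MVAux.neg_neg, MVAux.neg_zero] at h
    exact h
  show imp (mvneg m) m = top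
  have e2 : imp (mvneg m) m = oplus m m := by
    show oplus (mvneg (mvneg m)) m = oplus m m
    rw [MVAux.neg_neg]
  rw [e2]
  calc oplus m m
      = oplus (oplus m m) (MVAux.mvsmul (odot m m) k) := (MVAux.smul_absorb m k).symm
    _ = oplus (oplus m m) top := by rw [hsm]
    _ = top := MVAux.oplus_top' _
end
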